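/- Let N ≤ L and d ≤ N. Let H ∈ ℂ^{N×L} be written H^H = F·C with F ∈ ℂ^{L×N} truncated unitary (F^H F = I_N) and C ∈ ℂ^{N×N} invertible. Let F̂ ∈ ℂ^{L×N} be truncated unitary (F̂^H F̂ = I_N), let Ũ ∈ ℂ^{N×d} and V ∈ ℂ^{L×m} be truncated unitary (Ũ^H Ũ = I_d, V^H V = I_m), and suppose the quantized alignment equation Ũ^H F̂^H V = 0 holds. Define the receive filter G = C^{-1} F^H F̂ Ũ. Then for every P > 0 the interference leakage power satisfies L := (P/d)·‖G^H H V‖_F² ≤ P·‖F F^H − F̂ F̂^H‖_F² = 2P·d_c²(F̂, F). -/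

import Mathlib

open Matrix

/-- Squared Frobenius norm of a complex matrix. -/
noncomputable def frobNormSq {m n : Type*} [Fintype m] [Fintype n]
    (A : Matrix m n ℂ) : ℝ :=
  ∑ i, ∑ j, ‖A i j‖ ^ 2

/-- Squared chordal distance between the column spaces of two truncated unitary
matrices: `d_c(X,Y)² = (1/2) ‖X Xᴴ − Y Yᴴ‖_F²`. -/
noncomputable def chordalDistSq {L N : ℕ} (X Y : Matrix (Fin L) (Fin N) ℂ) : ℝ :=
  (1 / 2) * frobNormSq (X * Xᴴ - Y * Yᴴ)

lemma frobNormSq_nonneg {m n : Type*} [Fintype m] [Fintype n] (A : Matrix m n ℂ) :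
    0 ≤ frobNormSq A := by
  apply Finset.sum_nonneg; intro i _; apply Finset.sum_nonneg; intro j _; positivity

lemma frobNormSq_eq_trace {m n : Type*} [Fintype m] [Fintype n] [DecidableEq n]
    (A : Matrix m n ℂ) : frobNormSq A = (Matrix.trace (Aᴴ * A)).re := by
  unfold frobNormSq
  simp only [Matrix.trace, Matrix.diag, Matrix.mul_apply, Matrix.conjTranspose_apply,
    Complex.re_sum]
  rw [Finset.sum_comm]
  apply Finset.sum_congr rfl; intro i _
  apply Finset.sum_congr rfl; intro j _
  rw [Complex.sq_norm]
  simp [Complex.star_def, Complex.normSq_apply, Complex.mul_re, Complex.conj_re, Complex.conj_im]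

lemma frobNormSq_conjTranspose {m n : Type*} [Fintype m] [Fintype n] (A : Matrix m n ℂ) :
    frobNormSq Aᴴ = frobNormSq A := by
  unfold frobNormSq
  rw [Finset.sum_comm]
  simp [Matrix.conjTranspose_apply]

lemma frobNormSq_sub_comm {m n : Type*} [Fintype m] [Fintype n] (A B : Matrix m n ℂ) :
    frobNormSq (A - B) = frobNormSq (B - A) := by
  unfold frobNormSq
  apply Finset.sum_congr rfl; intro i _
  apply Finset.sum_congr rfl; intro j _
  have h : (A - B) i j = -((B - A) i j) := by simp [Matrix.sub_apply]
  rw [h, norm_neg]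

lemma frob_mul_right {m n p : Type*} [Fintype m] [Fintype n] [Fintype p] [DecidableEq n]
    [DecidableEq p] (B : Matrix m n ℂ) (V : Matrix n p ℂ) (hV : Vᴴ * V = 1) :
    frobNormSq (B * V) ≤ frobNormSq B := by
  set Q : Matrix n n ℂ := 1 - V * Vᴴ with hQ
  have hQH : Qᴴ = Q := by
    simp [hQ, Matrix.conjTranspose_sub, Matrix.conjTranspose_mul]
  have hQ2 : Q * Q = Q := by
    simp only [hQ, Matrix.sub_mul, Matrix.mul_sub, Matrix.one_mul, Matrix.mul_one]
    rw [Matrix.mul_assoc, ← Matrix.mul_assoc Vᴴ, hV, Matrix.one_mul]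
    abel
  have key : frobNormSq B = frobNormSq (B * V) + frobNormSq (B * Q) := by
    rw [frobNormSq_eq_trace, frobNormSq_eq_trace, frobNormSq_eq_trace,
      ← Complex.add_re]
    congr 1
    rw [Matrix.conjTranspose_mul, Matrix.conjTranspose_mul, hQH]
    have e1 : Vᴴ * Bᴴ * (B * V) = Vᴴ * (Bᴴ * B) * V := by
      rw [Matrix.mul_assoc, Matrix.mul_assoc, Matrix.mul_assoc]
    have e2 : Q * Bᴴ * (B * Q) = Q * (Bᴴ * B) * Q := by
      rw [Matrix.mul_assoc, Matrix.mul_assoc, Matrix.mul_assoc]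
    rw [e1, e2, Matrix.trace_mul_cycle Vᴴ (Bᴴ * B) V,
      Matrix.trace_mul_cycle Q (Bᴴ * B) Q, ← Matrix.trace_add]
    congr 1
    have e3 : Q * Q * (Bᴴ * B) = Q * (Bᴴ * B) := by rw [hQ2]
    rw [e3]
    have e4 : V * Vᴴ * (Bᴴ * B) + Q * (Bᴴ * B) = (V * Vᴴ + Q) * (Bᴴ * B) := by
      rw [Matrix.add_mul]
    rw [e4]
    have e5 : V * Vᴴ + Q = 1 := by rw [hQ]; abel
    rw [e5, Matrix.one_mul]
  rw [key]
  have := frobNormSq_nonneg (B * Q)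
  linarith

/-- **Theorem 1 (deterministic core).** With `Hᴴ = F C`, receive filter
`G = C⁻¹ Fᴴ F̂ Ũ`, and quantized alignment `Ũᴴ F̂ᴴ V = 0`, the interference
leakage `(P/d)‖Gᴴ H V‖_F²` is at most `P‖F Fᴴ − F̂ F̂ᴴ‖_F² = 2 P d_c(F̂,F)²`. -/
theorem leakage_bounded_by_chordal_distance
    (N L d m : ℕ) (hNL : N ≤ L) (hdN : d ≤ N) (hd : 0 < d)
    (H : Matrix (Fin N) (Fin L) ℂ)
    (F : Matrix (Fin L) (Fin N) ℂ) (C : Matrix (Fin N) (Fin N) ℂ)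
    (hFC : Hᴴ = F * C) (hF : Fᴴ * F = 1) (hC : IsUnit C.det)
    (Fhat : Matrix (Fin L) (Fin N) ℂ) (hFhat : Fhatᴴ * Fhat = 1)
    (U : Matrix (Fin N) (Fin d) ℂ) (hU : Uᴴ * U = 1)
    (V : Matrix (Fin L) (Fin m) ℂ) (hV : Vᴴ * V = 1)
    (hIA : Uᴴ * Fhatᴴ * V = 0)
    (G : Matrix (Fin N) (Fin d) ℂ) (hG : G = C⁻¹ * Fᴴ * Fhat * U)
    (P : ℝ) (hP : 0 < P) :
    (P / d) * frobNormSq (Gᴴ * H * V) ≤ P * frobNormSq (F * Fᴴ - Fhat * Fhatᴴ) ∧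
      P * frobNormSq (F * Fᴴ - Fhat * Fhatᴴ) = 2 * P * chordalDistSq Fhat F := by
  have hH : H = Cᴴ * Fᴴ := by
    have := congrArg Matrix.conjTranspose hFC
    simpa [Matrix.conjTranspose_mul] using this
  have hCinv : (C⁻¹)ᴴ * Cᴴ = 1 := by
    rw [← Matrix.conjTranspose_mul, Matrix.mul_nonsing_inv C hC, Matrix.conjTranspose_one]
  have hkey : Gᴴ * H * V = (Fhat * U)ᴴ * ((F * Fᴴ - Fhat * Fhatᴴ) * V) := by
    subst hG; subst hH
    simp only [Matrix.conjTranspose_mul, Matrix.conjTranspose_conjTranspose,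
      Matrix.sub_mul, Matrix.mul_sub, Matrix.mul_assoc]
    rw [← Matrix.mul_assoc (C⁻¹)ᴴ Cᴴ, hCinv, Matrix.one_mul]
    rw [← Matrix.mul_assoc Fhatᴴ Fhat, hFhat, Matrix.one_mul]
    rw [← Matrix.mul_assoc Uᴴ Fhatᴴ V, hIA, sub_zero]
  have hFhatU : (Fhat * U)ᴴ * (Fhat * U) = 1 := by
    rw [Matrix.conjTranspose_mul, Matrix.mul_assoc, ← Matrix.mul_assoc Fhatᴴ, hFhat,
      Matrix.one_mul, hU]
  have hstep1 : frobNormSq (Gᴴ * H * V) ≤ frobNormSq ((F * Fᴴ - Fhat * Fhatᴴ) * V) := by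
    rw [hkey]
    calc frobNormSq ((Fhat * U)ᴴ * ((F * Fᴴ - Fhat * Fhatᴴ) * V))
        = frobNormSq (((F * Fᴴ - Fhat * Fhatᴴ) * V)ᴴ * (Fhat * U)) := by
          rw [← frobNormSq_conjTranspose (((F * Fᴴ - Fhat * Fhatᴴ) * V)ᴴ * (Fhat * U))]
          simp [Matrix.conjTranspose_mul]
      _ ≤ frobNormSq (((F * Fᴴ - Fhat * Fhatᴴ) * V)ᴴ) := frob_mul_right _ _ hFhatU
      _ = frobNormSq ((F * Fᴴ - Fhat * Fhatᴴ) * V) := frobNormSq_conjTranspose _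
  have hbd : frobNormSq (Gᴴ * H * V) ≤ frobNormSq (F * Fᴴ - Fhat * Fhatᴴ) :=
    le_trans hstep1 (frob_mul_right _ _ hV)
  constructor
  · have hd1 : (1 : ℝ) ≤ d := by exact_mod_cast hd
    have hPd : P / d ≤ P := by
      rw [div_le_iff₀ (by linarith)]
      nlinarith
    have hPd0 : 0 < P / (d : ℝ) := by positivity
    calc (P / d) * frobNormSq (Gᴴ * H * V)
        ≤ (P / d) * frobNormSq (F * Fᴴ - Fhat * Fhatᴴ) :=
          mul_le_mul_of_nonneg_left hbd (le_of_lt hPd0)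
      _ ≤ P * frobNormSq (F * Fᴴ - Fhat * Fhatᴴ) :=
          mul_le_mul_of_nonneg_right hPd (frobNormSq_nonneg _)
  · unfold chordalDistSq
    rw [frobNormSq_sub_comm (Fhat * Fhatᴴ)]
    ring
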